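/- arXiv:2209.07308 — 2 statements merged into one kernel-verified Lean document; each statement's English description precedes it below -/
import Mathlib

section
/- Let η = η_A ⊗ η_B with η_A, η_B Hermitian invertible, and let ψ be a vector with ⟨ψ, ηψ⟩ ≠ 0. Define T = |ψ⟩⟨ψ|η / ⟨ψ|η|ψ⟩ and T_A = tr_B(T). Then T_A = T̃_A · η_A where T̃_A := tr_B(|ψ⟩⟨ψ|(1 ⊗ η_B)) / ⟨ψ|η|ψ⟩ is Hermitian. -/
open Matrix Kronecker

/-- Partial trace over the second tensor factor. -/
noncomputable def trB {α β : Type*} [Fintype β]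
    (X : Matrix (α × β) (α × β) ℂ) : Matrix α α ℂ :=
  Matrix.of fun a a' => ∑ b : β, X (a, b) (a', b)

lemma trB_mul_kron {m k : ℕ} (ηA : Matrix (Fin m) (Fin m) ℂ)
    (ηB : Matrix (Fin k) (Fin k) ℂ)
    (Y : Matrix (Fin m × Fin k) (Fin m × Fin k) ℂ) :
    trB (Y * (ηA ⊗ₖ ηB)) = trB (Y * ((1 : Matrix (Fin m) (Fin m) ℂ) ⊗ₖ ηB)) * ηA := by
  ext a a'
  simp only [trB, Matrix.of_apply, Matrix.mul_apply, kroneckerMap_apply, Matrix.one_apply,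
    Fintype.sum_prod_type, ite_mul, one_mul, zero_mul, mul_ite, mul_one, mul_zero,
    Finset.sum_ite_irrel, Finset.sum_const_zero, Finset.sum_ite_eq', Finset.mem_univ, if_true,
    Finset.sum_mul]
  rw [Finset.sum_comm]
  exact Finset.sum_congr rfl fun x _ => Finset.sum_congr rfl fun y _ =>
    Finset.sum_congr rfl fun z _ => by ring

lemma trB_smul {m k : ℕ} (c : ℂ) (X : Matrix (Fin m × Fin k) (Fin m × Fin k) ℂ) :
    trB (c • X) = c • trB X := by
  ext a a'
  simp [trB, Finset.mul_sum]

lemma trB_herm {m k : ℕ} (ηB : Matrix (Fin k) (Fin k) ℂ) (hηB : ηB.IsHermitian)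
    (ψ : Fin m × Fin k → ℂ) :
    (trB (vecMulVec ψ (star ψ) * ((1 : Matrix (Fin m) (Fin m) ℂ) ⊗ₖ ηB))).IsHermitian := by
  show _ᴴ = _
  ext a a'
  simp only [conjTranspose_apply, trB, Matrix.of_apply, Matrix.mul_apply, vecMulVec_apply,
    kroneckerMap_apply, Matrix.one_apply, Fintype.sum_prod_type, ite_mul, one_mul, zero_mul,
    mul_ite, mul_one, mul_zero, Finset.sum_ite_irrel, Finset.sum_const_zero,
    Finset.sum_ite_eq', Finset.mem_univ, if_true, star_sum, star_mul', Pi.star_apply,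
    star_star]
  rw [Finset.sum_comm]
  refine Finset.sum_congr rfl fun b _ => Finset.sum_congr rfl fun y _ => ?_
  rw [hηB.apply]
  ring

/-- For `η = η_A ⊗ η_B` Hermitian and `⟨ψ|η|ψ⟩ ≠ 0`, the reduced transition matrix
`T_A = tr_B(|ψ⟩⟨ψ|η/⟨ψ|η|ψ⟩)` factors as `T̃_A · η_A` with
`T̃_A = tr_B(|ψ⟩⟨ψ|(1 ⊗ η_B))/⟨ψ|η|ψ⟩` Hermitian. -/
theorem reduced_transition_matrix_factorization {m k : ℕ}
    (ηA : Matrix (Fin m) (Fin m) ℂ) (ηB : Matrix (Fin k) (Fin k) ℂ)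
    (hηA : ηA.IsHermitian) (hηB : ηB.IsHermitian)
    (hA : IsUnit ηA.det) (hB : IsUnit ηB.det)
    (ψ : Fin m × Fin k → ℂ)
    (hψ : star ψ ⬝ᵥ (ηA ⊗ₖ ηB).mulVec ψ ≠ 0) :
    let c : ℂ := star ψ ⬝ᵥ (ηA ⊗ₖ ηB).mulVec ψ
    let T : Matrix (Fin m × Fin k) (Fin m × Fin k) ℂ :=
      c⁻¹ • (vecMulVec ψ (star ψ) * (ηA ⊗ₖ ηB))
    let tildeTA : Matrix (Fin m) (Fin m) ℂ :=
      c⁻¹ • trB (vecMulVec ψ (star ψ) * ((1 : Matrix (Fin m) (Fin m) ℂ) ⊗ₖ ηB))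
    trB T = tildeTA * ηA ∧ tildeTA.IsHermitian := by
  intro c T tildeTA
  have hH : (ηA ⊗ₖ ηB)ᴴ = ηA ⊗ₖ ηB := by
    ext ⟨a, b⟩ ⟨a', b'⟩
    simp only [conjTranspose_apply, kroneckerMap_apply, star_mul', hηA.apply, hηB.apply]
  have hc : star c = c := by
    calc star (star ψ ⬝ᵥ (ηA ⊗ₖ ηB).mulVec ψ)
        = star ((ηA ⊗ₖ ηB).mulVec ψ) ⬝ᵥ ψ := by
          rw [star_dotProduct, star_star]
      _ = c := by rw [star_mulVec, hH, ← dotProduct_mulVec]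
  refine ⟨?_, ?_⟩
  · show trB (c⁻¹ • (vecMulVec ψ (star ψ) * (ηA ⊗ₖ ηB))) = _
    rw [trB_smul, trB_mul_kron, smul_mul_assoc]
  · show tildeTAᴴ = tildeTA
    show (c⁻¹ • _)ᴴ = _
    rw [conjTranspose_smul, trB_herm ηB hηB ψ]
    congr 1
    rw [star_inv₀, hc]
end

section
/- If both η_A and η_B are negative definite Hermitian operators and η = η_A ⊗ η_B, then for any ψ with ⟨ψ, ηψ⟩ ≠ 0, the eigenvalues of T_A := tr_B(|ψ⟩⟨ψ|η)/⟨ψ|η|ψ⟩ are nonnegative real numbers. -/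
open Matrix Kronecker ComplexOrder

lemma psd_spectrum {n : ℕ} {M : Matrix (Fin n) (Fin n) ℂ} (hM : M.PosSemidef) :
    ∀ μ ∈ spectrum ℂ M, ∃ r : ℝ, 0 ≤ r ∧ μ = (r : ℂ) := by
  intro μ hμ
  rw [spectrum.mem_iff] at hμ
  rw [Matrix.isUnit_iff_isUnit_det, isUnit_iff_ne_zero, not_not] at hμ
  obtain ⟨v, hv, hveq⟩ := (Matrix.exists_mulVec_eq_zero_iff).mpr hμ
  have hMv : M.mulVec v = μ • v := by
    have := congrArg (fun w => w + M.mulVec v) hveq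
    simpa [Matrix.sub_mulVec, Matrix.algebraMap_eq_diagonal, Matrix.diagonal_mulVec_single,
      Matrix.mulVec, dotProduct, Matrix.diagonal, Pi.smul_apply, smul_eq_mul,
      funext_iff, Finset.mul_sum, Finset.sum_ite_eq, sub_add_cancel] using this.symm
  have hq : star v ⬝ᵥ M.mulVec v = μ * (star v ⬝ᵥ v) := by
    rw [hMv, dotProduct_smul]; simp [smul_eq_mul]
  have hq0 : 0 ≤ star v ⬝ᵥ M.mulVec v := hM.dotProduct_mulVec_nonneg v
  have hp0 : 0 ≤ star v ⬝ᵥ v := dotProduct_star_self_nonneg v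
  have hpne : star v ⬝ᵥ v ≠ 0 := fun h => hv (dotProduct_star_self_eq_zero.mp h)
  set p := star v ⬝ᵥ v
  set q := star v ⬝ᵥ M.mulVec v
  rw [Complex.nonneg_iff] at hq0 hp0
  have hpre : 0 < p.re := lt_of_le_of_ne hp0.1 (by
    intro h; apply hpne; apply Complex.ext <;> simp [← h, ← hp0.2])
  refine ⟨μ.re, ?_, ?_⟩
  · have := congrArg Complex.re hq
    simp [Complex.mul_re, ← hp0.2] at this
    have h2 : μ.re = q.re / p.re := eq_div_of_mul_eq hpre.ne' this.symm
    rw [h2]; exact div_nonneg hq0.1 hpre.le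
  · have := congrArg Complex.im hq
    simp [Complex.mul_im, ← hp0.2, ← hq0.2] at this
    rcases this with h | h
    · exact Complex.ext rfl h
    · exact absurd h hpre.ne'

lemma kron_conjTranspose {m k : ℕ} (A : Matrix (Fin m) (Fin m) ℂ) (B : Matrix (Fin k) (Fin k) ℂ) :
    (A ⊗ₖ B)ᴴ = Aᴴ ⊗ₖ Bᴴ := by
  ext ⟨a, b⟩ ⟨a', b'⟩
  simp [conjTranspose_apply, kroneckerMap_apply]

lemma kron_psd {m k : ℕ} {A : Matrix (Fin m) (Fin m) ℂ} {B : Matrix (Fin k) (Fin k) ℂ}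
    (hA : A.PosSemidef) (hB : B.PosSemidef) : (A ⊗ₖ B).PosSemidef := by
  exact hA.kronecker hB

lemma trB_factor {m k : ℕ} (ηA : Matrix (Fin m) (Fin m) ℂ) (ηB : Matrix (Fin k) (Fin k) ℂ)
    (ψ : Fin m × Fin k → ℂ) :
    trB (vecMulVec ψ (star ψ) * (ηA ⊗ₖ ηB)) =
      ((Matrix.of fun a b => ψ (a, b)) * ηBᵀ * (Matrix.of fun a b => ψ (a, b))ᴴ) * ηA := by
  ext a a'
  simp only [trB, Matrix.of_apply, Matrix.mul_apply, vecMulVec_apply, kroneckerMap_apply,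
    conjTranspose_apply, transpose_apply, Fintype.sum_prod_type, Pi.star_apply,
    Finset.sum_mul, Finset.mul_sum]
  rw [Finset.sum_comm]
  refine Finset.sum_congr rfl fun b _ => ?_
  rw [Finset.sum_comm]
  refine Finset.sum_congr rfl fun a'' _ => Finset.sum_congr rfl fun b'' _ => ?_
  ring

lemma psd_smul_nonneg {n : ℕ} {c : ℂ} (hc : 0 ≤ c) {X : Matrix (Fin n) (Fin n) ℂ}
    (hX : X.PosSemidef) : (c • X).PosSemidef := by
  refine .of_dotProduct_mulVec_nonneg ?_ fun x => ?_
  · have hcs : star c = c := by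
      rw [Complex.nonneg_iff] at hc
      simp [Complex.ext_iff, ← hc.2]
    rw [IsHermitian, conjTranspose_smul, hcs, hX.1]
  · rw [Matrix.smul_mulVec, dotProduct_smul, smul_eq_mul]
    exact mul_nonneg hc (hX.dotProduct_mulVec_nonneg x)


/-- For negative definite `η_A, η_B` and `⟨ψ|η|ψ⟩ ≠ 0` with `η = η_A ⊗ η_B`,
all eigenvalues of `T_A = tr_B(|ψ⟩⟨ψ|η)/⟨ψ|η|ψ⟩` are nonnegative reals. -/
theorem eigenvalues_nonneg_of_negDef_factors {m k : ℕ}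
    (ηA : Matrix (Fin m) (Fin m) ℂ) (ηB : Matrix (Fin k) (Fin k) ℂ)
    (hηA : (-ηA).PosDef) (hηB : (-ηB).PosDef)
    (ψ : Fin m × Fin k → ℂ)
    (hψ : star ψ ⬝ᵥ (ηA ⊗ₖ ηB).mulVec ψ ≠ 0) :
    let TA : Matrix (Fin m) (Fin m) ℂ :=
      (star ψ ⬝ᵥ (ηA ⊗ₖ ηB).mulVec ψ)⁻¹ •
        trB (vecMulVec ψ (star ψ) * (ηA ⊗ₖ ηB))
    ∀ μ ∈ spectrum ℂ TA, ∃ r : ℝ, 0 ≤ r ∧ μ = (r : ℂ) := by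

  intro TA
  set c := star ψ ⬝ᵥ (ηA ⊗ₖ ηB).mulVec ψ with hc_def
  -- c is nonneg
  have hη_eq : ηA ⊗ₖ ηB = (-ηA) ⊗ₖ (-ηB) := by
    ext ⟨a, b⟩ ⟨a', b'⟩; simp [kroneckerMap_apply]
  have hη_psd : (ηA ⊗ₖ ηB).PosSemidef := by
    rw [hη_eq]; exact kron_psd hηA.posSemidef hηB.posSemidef
  have hc0 : 0 ≤ c := hη_psd.dotProduct_mulVec_nonneg ψ
  have hcinv : 0 ≤ c⁻¹ := by
    rw [Complex.nonneg_iff] at hc0 ⊢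
    have : c = (c.re : ℂ) := Complex.ext rfl (by simp [← hc0.2])
    rw [this, ← Complex.ofReal_inv]
    constructor
    · simpa using inv_nonneg.mpr hc0.1
    · simp
  -- the matrices
  set Ψ : Matrix (Fin m) (Fin k) ℂ := Matrix.of fun a b => ψ (a, b) with hΨ
  set N : Matrix (Fin m) (Fin m) ℂ := Ψ * ηBᵀ * Ψᴴ with hN
  have hTA : TA = c⁻¹ • (N * ηA) := by
    rw [show TA = c⁻¹ • trB (vecMulVec ψ (star ψ) * (ηA ⊗ₖ ηB)) from rfl,
      trB_factor]
  -- negative N is PSD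
  have hnegN : (-N).PosSemidef := by
    have h1 : (-N) = Ψ * (-ηB)ᵀ * Ψᴴ := by
      rw [hN, transpose_neg]; simp [Matrix.neg_mul, Matrix.mul_neg]
    rw [h1]
    exact (hηB.transpose.posSemidef).mul_mul_conjTranspose_same Ψ
  -- square root of -ηA
  obtain ⟨S, hS2, hSH⟩ : ∃ S : Matrix (Fin m) (Fin m) ℂ, S * S = -ηA ∧ S.IsHermitian := by
    open scoped MatrixOrder in
    exact ⟨CFC.sqrt (-ηA), CFC.sqrt_mul_sqrt_self _ hηA.posSemidef.nonneg,
      (CFC.sqrt_nonneg _).posSemidef.1⟩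
  have hSu : IsUnit S := by
    rw [Matrix.isUnit_iff_isUnit_det]
    have : IsUnit (S.det * S.det) := by
      rw [← det_mul, hS2]; exact hηA.isUnit.map detMonoidHom
    exact isUnit_of_mul_isUnit_left this
  have hSdet : IsUnit S.det := (Matrix.isUnit_iff_isUnit_det S).mp hSu
  -- conjugation
  have hconj : (hSu.unit : Matrix (Fin m) (Fin m) ℂ) * TA * (↑hSu.unit⁻¹ : Matrix (Fin m) (Fin m) ℂ)
      = c⁻¹ • (S * (-N) * S) := by
    rw [Matrix.coe_units_inv, hSu.unit_spec, hTA]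
    rw [Matrix.mul_smul, Matrix.smul_mul]
    congr 1
    have : ηA = -(S * S) := by rw [hS2, neg_neg]
    rw [this]
    rw [show S * (N * -(S * S)) * S⁻¹ = S * -N * (S * (S * S⁻¹)) by noncomm_ring [Matrix.mul_assoc],
      Matrix.mul_nonsing_inv S hSdet, Matrix.mul_one]
  intro μ hμ
  have hμ' : μ ∈ spectrum ℂ (c⁻¹ • (S * (-N) * S)) := by
    rw [← hconj, spectrum.units_conjugate]
    exact hμ
  refine psd_spectrum ?_ μ hμ'
  refine psd_smul_nonneg hcinv ?_
  have := hnegN.mul_mul_conjTranspose_same S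
  rwa [hSH.eq] at this
end
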